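/- Let G be a graph of depth-d clique minor number less than t, i.e., K_t is not a depth-d minor of G. Then the 2VC dimension of the set system Balls_d(G) of radius-d balls of G is at most t − 1. -/

import Mathlib

/-- The radius-`d` ball around `w` in `G`. -/
def ball {V : Type*} (G : SimpleGraph V) (d : ℕ) (w : V) : Set V :=
  {v | ∃ p : G.Walk w v, p.length ≤ d}

/-- The set `S` induces in `G` a connected subgraph of radius at most `d`. -/
def ConnRadiusLE {V : Type*} (G : SimpleGraph V) (d : ℕ) (S : Set V) : Prop :=
  ∃ c ∈ S, ∀ v ∈ S, ∃ p : G.Walk c v, p.length ≤ d ∧ ∀ x ∈ p.support, x ∈ S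

/-- `H` is a depth-`d` minor of `G`. -/
def IsDepthMinor {V W : Type*} (d : ℕ) (G : SimpleGraph V) (H : SimpleGraph W) : Prop :=
  ∃ η : W → Set V,
    (∀ w, ConnRadiusLE G d (η w)) ∧
    (∀ w w' : W, w ≠ w' → Disjoint (η w) (η w')) ∧
    (∀ w w' : W, H.Adj w w' → ∃ x ∈ η w, ∃ y ∈ η w', G.Adj x y)

/- ### Auxiliary machinery -/

lemma mem_ball_iff_edist {V : Type*} (G : SimpleGraph V) (d : ℕ) (w v : V) :
    v ∈ ball G d w ↔ G.edist w v ≤ d := by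
  constructor
  · rintro ⟨p, hp⟩
    exact (SimpleGraph.edist_le p).trans (by exact_mod_cast hp)
  · intro hle
    obtain ⟨p, hp⟩ := SimpleGraph.exists_walk_of_edist_ne_top
      (hle.trans_lt (WithTop.coe_lt_top d)).ne
    exact ⟨p, by exact_mod_cast hp.le.trans hle⟩

/-- If a walk goes from `A` to `B` inside `A ∪ B` with `A, B` disjoint, then there is an
edge between `A` and `B`. -/
lemma exists_adj_of_walk {V : Type*} {G : SimpleGraph V} {A B : Set V}
    (hAB : Disjoint A B) : ∀ {a b : V} (p : G.Walk a b), a ∈ A → b ∈ B →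
    (∀ u ∈ p.support, u ∈ A ∪ B) → ∃ x ∈ A, ∃ y ∈ B, G.Adj x y := by
  intro a b p
  induction p with
  | nil =>
    intro ha hb _
    exact absurd ha (Set.disjoint_right.mp hAB hb)
  | @cons a c b hadj q ih =>
    intro ha hb hsup
    rcases hsup c (by simp) with hc | hc
    · exact ih hc hb fun u hu => hsup u (by simp [hu])
    · exact ⟨a, ha, c, hc, hadj⟩

/-- Any vertex on a geodesic splits the distance exactly. -/
lemma edist_split {V : Type*} {G : SimpleGraph V} {a b : V} {p : G.Walk a b}
    (hp : (p.length : ℕ∞) = G.edist a b) {u : V} (hu : u ∈ p.support) :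
    G.edist a u + G.edist u b = G.edist a b := by
  obtain ⟨q, r, rfl⟩ := SimpleGraph.Walk.mem_support_iff_exists_append.mp hu
  have h1 : G.edist a u ≤ q.length := SimpleGraph.edist_le q
  have h2 : G.edist u b ≤ r.length := SimpleGraph.edist_le r
  have h3 : G.edist a b ≤ G.edist a u + G.edist u b := G.edist_triangle
  have h4 : (q.length : ℕ∞) + (r.length : ℕ∞) = G.edist a b := by
    rw [← hp, SimpleGraph.Walk.length_append]
    push_cast
    ring
  have h5 : G.edist a u + G.edist u b ≤ G.edist a b := h4 ▸ add_le_add h1 h2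
  exact le_antisymm h5 h3

/-- The tie-broken Voronoi cell of `x i` among the points `x`, restricted to
distance at most `d`. -/
def vcell {V : Type*} (G : SimpleGraph V) (d : ℕ) {t : ℕ} (x : Fin t → V) (i : Fin t) :
    Set V :=
  {v | G.edist (x i) v ≤ d ∧ ∀ k, k ≠ i →
    G.edist (x i) v < G.edist (x k) v ∨ (G.edist (x i) v = G.edist (x k) v ∧ i < k)}

lemma vcell_disjoint {V : Type*} (G : SimpleGraph V) (d : ℕ) {t : ℕ} (x : Fin t → V)
    {i j : Fin t} (hij : i ≠ j) : Disjoint (vcell G d x i) (vcell G d x j) := by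
  rw [Set.disjoint_left]
  rintro v ⟨_, hvi⟩ ⟨_, hvj⟩
  rcases hvi j hij.symm with h1 | ⟨h1, h1'⟩ <;> rcases hvj i hij with h2 | ⟨h2, h2'⟩
  · exact absurd (h1.trans h2) (lt_irrefl _)
  · exact absurd (h2 ▸ h1) (lt_irrefl _)
  · exact absurd (h1 ▸ h2) (lt_irrefl _)
  · exact absurd (h1'.trans h2') (lt_irrefl _)

lemma vcell_mem_self {V : Type*} (G : SimpleGraph V) (d : ℕ) {t : ℕ} {x : Fin t → V}
    (hxinj : Function.Injective x) (i : Fin t) : x i ∈ vcell G d x i := by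
  refine ⟨by simp [SimpleGraph.edist_self], fun k hk => Or.inl ?_⟩
  rw [SimpleGraph.edist_self]
  exact SimpleGraph.edist_pos_of_ne fun hxy => hk (hxinj hxy)

lemma vcell_conn {V : Type*} (G : SimpleGraph V) (d : ℕ) {t : ℕ} {x : Fin t → V}
    (hxinj : Function.Injective x) (i : Fin t) : ConnRadiusLE G d (vcell G d x i) := by
  refine ⟨x i, vcell_mem_self G d hxinj i, fun v hv => ?_⟩
  obtain ⟨hvd, hvk⟩ := hv
  obtain ⟨p, hp⟩ := SimpleGraph.exists_walk_of_edist_ne_top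
    (hvd.trans_lt (WithTop.coe_lt_top d)).ne
  refine ⟨p, by exact_mod_cast hp.le.trans hvd, fun u hu => ?_⟩
  have hsplit : G.edist (x i) u + G.edist u v = G.edist (x i) v := edist_split hp hu
  have hefin : G.edist u v ≠ ⊤ := by
    refine (lt_of_le_of_lt ?_ (hvd.trans_lt (WithTop.coe_lt_top d))).ne
    calc G.edist u v ≤ G.edist (x i) u + G.edist u v := le_add_self
    _ = G.edist (x i) v := hsplit
  refine ⟨?_, fun k hk => ?_⟩
  · calc G.edist (x i) u ≤ G.edist (x i) u + G.edist u v := le_self_add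
    _ = G.edist (x i) v := hsplit
    _ ≤ d := hvd
  · have htri : G.edist (x k) v ≤ G.edist (x k) u + G.edist u v := G.edist_triangle
    rcases hvk k hk with hlt | ⟨heq, hik⟩
    · left
      have : G.edist (x i) u + G.edist u v < G.edist (x k) u + G.edist u v :=
        lt_of_lt_of_le (hsplit ▸ hlt) htri
      exact (WithTop.add_lt_add_iff_right hefin).mp this
    · have : G.edist (x i) u + G.edist u v ≤ G.edist (x k) u + G.edist u v := by
        rw [hsplit, heq]; exact htri
      have hle := (WithTop.add_le_add_iff_right hefin).mp this
      rcases hle.lt_or_eq with h' | h'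
      · exact Or.inl h'
      · exact Or.inr ⟨h', hik⟩

/-- Every vertex on a geodesic from a witnessing center `w` to `x i` lies in the cell
of `i` or of `j`. -/
lemma vcell_support {V : Type*} (G : SimpleGraph V) (d : ℕ) {t : ℕ} (x : Fin t → V)
    {i j : Fin t} (hij : i ≠ j) (w : V)
    (hwi : G.edist w (x i) ≤ d)
    (hwk : ∀ k, k ≠ i → k ≠ j → (d : ℕ∞) < G.edist w (x k))
    {P : G.Walk w (x i)} (hP : (P.length : ℕ∞) = G.edist w (x i)) :
    ∀ u ∈ P.support, u ∈ vcell G d x i ∪ vcell G d x j := by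
  intro u hu
  have hsplit : G.edist w u + G.edist u (x i) = G.edist w (x i) := edist_split hP hu
  have hb : G.edist w u ≠ ⊤ := by
    refine (lt_of_le_of_lt ?_ (hwi.trans_lt (WithTop.coe_lt_top d))).ne
    calc G.edist w u ≤ G.edist w u + G.edist u (x i) := le_self_add
    _ = G.edist w (x i) := hsplit
  have hfi : G.edist (x i) u = G.edist u (x i) := G.edist_comm
  have hfiu_le : G.edist (x i) u ≤ (d : ℕ∞) := by
    rw [hfi]
    calc G.edist u (x i) ≤ G.edist w u + G.edist u (x i) := le_add_self
    _ = G.edist w (x i) := hsplit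
    _ ≤ d := hwi
  have key : ∀ k, k ≠ i → k ≠ j → G.edist (x i) u < G.edist (x k) u := by
    intro k hki hkj
    have h1 : G.edist w u + G.edist (x i) u ≤ (d : ℕ∞) := by
      rw [hfi, hsplit]; exact hwi
    have h2 : (d : ℕ∞) < G.edist w u + G.edist (x k) u := by
      refine lt_of_lt_of_le (hwk k hki hkj) ?_
      calc G.edist w (x k) ≤ G.edist w u + G.edist u (x k) := G.edist_triangle
      _ = G.edist w u + G.edist (x k) u := by rw [G.edist_comm (u := u) (v := x k)]
    exact (WithTop.add_lt_add_iff_left hb).mp (lt_of_le_of_lt h1 h2)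
  rcases lt_trichotomy (G.edist (x i) u) (G.edist (x j) u) with hlt | heq | hgt
  · left
    refine ⟨hfiu_le, fun k hk => ?_⟩
    by_cases hkj : k = j
    · subst hkj; exact Or.inl hlt
    · exact Or.inl (key k hk hkj)
  · rcases lt_or_gt_of_ne hij with hlt' | hgt'
    · left
      refine ⟨hfiu_le, fun k hk => ?_⟩
      by_cases hkj : k = j
      · subst hkj; exact Or.inr ⟨heq, hlt'⟩
      · exact Or.inl (key k hk hkj)
    · right
      refine ⟨heq ▸ hfiu_le, fun k hk => ?_⟩
      by_cases hki : k = i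
      · subst hki; exact Or.inr ⟨heq.symm, hgt'⟩
      · exact Or.inl (by rw [← heq]; exact key k hki hk)
  · right
    refine ⟨le_trans hgt.le hfiu_le, fun k hk => ?_⟩
    by_cases hki : k = i
    · subst hki; exact Or.inl hgt
    · exact Or.inl (hgt.trans (key k hki hk))

/-- If `K_t` is not a depth-`d` minor of `G`, then the 2VC dimension of the set system
of radius-`d` balls of `G` is at most `t - 1`: every 2-shattered set has at most
`t - 1` elements. -/
theorem twoVC_balls_le_of_no_clique_minor {V : Type*} (G : SimpleGraph V) (d t : ℕ)
    (h : ¬ IsDepthMinor d G (SimpleGraph.completeGraph (Fin t)))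
    (X : Finset V)
    (hX : ∀ x ∈ X, ∀ y ∈ X, x ≠ y → ∃ w : V, ball G d w ∩ ↑X = {x, y}) :
    X.card ≤ t - 1 := by
  by_contra hcard
  push_neg at hcard
  have ht : t ≤ X.card := by omega
  obtain ⟨Y, hYX, hYcard⟩ := Finset.exists_subset_card_eq ht
  let e := (Finset.equivFinOfCardEq hYcard).symm
  set x : Fin t → V := fun i => ((e i : Y) : V) with hxdef
  have hxX : ∀ i, x i ∈ X := fun i => hYX (e i).2
  have hxinj : Function.Injective x := by
    intro i j hij
    exact e.injective (Subtype.ext hij)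
  apply h
  refine ⟨vcell G d x, fun i => vcell_conn G d hxinj i,
    fun i j hij => vcell_disjoint G d x hij, fun i j hadj => ?_⟩
  have hij : i ≠ j := hadj.ne
  obtain ⟨w, hw⟩ := hX (x i) (hxX i) (x j) (hxX j) (hxinj.ne hij)
  have hmemi : x i ∈ ball G d w := by
    have hm : x i ∈ ({x i, x j} : Set V) := Set.mem_insert _ _
    rw [← hw] at hm
    exact hm.1
  have hmemj : x j ∈ ball G d w := by
    have hm : x j ∈ ({x i, x j} : Set V) := Set.mem_insert_iff.mpr (Or.inr rfl)
    rw [← hw] at hm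
    exact hm.1
  have hwi : G.edist w (x i) ≤ d := (mem_ball_iff_edist G d w (x i)).mp hmemi
  have hwj : G.edist w (x j) ≤ d := (mem_ball_iff_edist G d w (x j)).mp hmemj
  have hwk : ∀ k, k ≠ i → k ≠ j → (d : ℕ∞) < G.edist w (x k) := by
    intro k hki hkj
    by_contra hle
    push_neg at hle
    have hballk : x k ∈ ball G d w := (mem_ball_iff_edist G d w (x k)).mpr hle
    have hm : x k ∈ ({x i, x j} : Set V) := by
      rw [← hw]; exact ⟨hballk, hxX k⟩
    rcases Set.mem_insert_iff.mp hm with hki' | hkj'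
    · exact hki (hxinj hki')
    · exact hkj (hxinj (Set.mem_singleton_iff.mp hkj'))
  obtain ⟨P, hP⟩ := SimpleGraph.exists_walk_of_edist_ne_top
    (hwi.trans_lt (WithTop.coe_lt_top d)).ne
  obtain ⟨Q, hQ⟩ := SimpleGraph.exists_walk_of_edist_ne_top
    (hwj.trans_lt (WithTop.coe_lt_top d)).ne
  have hPs := vcell_support G d x hij w hwi hwk hP
  have hQs := vcell_support G d x hij.symm w hwj (fun k hkj hki => hwk k hki hkj) hQ
  have hsup : ∀ u ∈ (P.reverse.append Q).support, u ∈ vcell G d x i ∪ vcell G d x j := by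
    intro u hu
    rw [SimpleGraph.Walk.mem_support_append_iff] at hu
    rcases hu with hu | hu
    · exact hPs u (by simpa [SimpleGraph.Walk.support_reverse] using hu)
    · rcases hQs u hu with h' | h'
      · exact Or.inr h'
      · exact Or.inl h'
  exact exists_adj_of_walk (vcell_disjoint G d x hij) (P.reverse.append Q)
    (vcell_mem_self G d hxinj i) (vcell_mem_self G d hxinj j) hsup
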